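/- arXiv:2307.13078 — 3 statements merged into one kernel-verified Lean document; each statement's English description precedes it below -/
import Mathlib

section
/- Let W be an m × n real matrix and b ∈ ℝᵐ, and let u̲₁, u̲₂, ū₁, ū₂ ∈ ℝⁿ satisfy u̲₁ ≤ u̲₂ and ū₂ ≤ ū₁ entrywise. For j = 1, 2 define z̄ⱼ = W·((ūⱼ + u̲ⱼ)/2) + |W|·((ūⱼ − u̲ⱼ)/2) + b and z̲ⱼ = W·((ūⱼ + u̲ⱼ)/2) − |W|·((ūⱼ − u̲ⱼ)/2) + b, where |W| is the entrywise absolute value of W. Then z̄₂ ≤ z̄₁ and z̲₁ ≤ z̲₂ entrywise. -/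
/-- Monotonicity of IBP affine bounds w.r.t. inclusion of input
intervals. If `u̲₁ ≤ u̲₂` and `ū₂ ≤ ū₁` entrywise, then the IBP upper bounds
satisfy `z̄₂ ≤ z̄₁` and the IBP lower bounds satisfy `z̲₁ ≤ z̲₂` entrywise. -/
theorem ibp_affine_bounds_monotone
    (m n : ℕ) (W : Matrix (Fin m) (Fin n) ℝ) (b : Fin m → ℝ)
    (lb₁ lb₂ ub₁ ub₂ : Fin n → ℝ) (hlb : lb₁ ≤ lb₂) (hub : ub₂ ≤ ub₁) :
    W.mulVec ((ub₂ + lb₂) / 2) + (W.map fun a => |a|).mulVec ((ub₂ - lb₂) / 2) + b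
        ≤ W.mulVec ((ub₁ + lb₁) / 2) + (W.map fun a => |a|).mulVec ((ub₁ - lb₁) / 2) + b ∧
      W.mulVec ((ub₁ + lb₁) / 2) - (W.map fun a => |a|).mulVec ((ub₁ - lb₁) / 2) + b
        ≤ W.mulVec ((ub₂ + lb₂) / 2) - (W.map fun a => |a|).mulVec ((ub₂ - lb₂) / 2) + b := by
  constructor <;> intro i <;>
    simp only [Pi.add_apply, Pi.sub_apply, Matrix.mulVec, dotProduct,
      Matrix.map_apply, Pi.div_apply, Pi.ofNat_apply]
  · rw [← Finset.sum_add_distrib, ← Finset.sum_add_distrib]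
    refine add_le_add_left (Finset.sum_le_sum fun j _ => ?_) _
    nlinarith [hlb j, hub j, le_abs_self (W i j), neg_abs_le (W i j)]
  · rw [← Finset.sum_sub_distrib, ← Finset.sum_sub_distrib]
    refine add_le_add_left (Finset.sum_le_sum fun j _ => ?_) _
    nlinarith [hlb j, hub j, le_abs_self (W i j), neg_abs_le (W i j)]
end

section
/- Consider an L-layer feed-forward network specified by dimensions d₀, …, d_L ∈ ℕ, weight matrices W⁽ℓ⁾ ∈ ℝ^{d_ℓ × d_{ℓ−1}}, biases b⁽ℓ⁾ ∈ ℝ^{d_ℓ} for ℓ = 1, …, L, and activation functions σ⁽ℓ⁾ : ℝ → ℝ for ℓ = 1, …, L−1, each monotonically non-decreasing and continuous. Fix an input x ∈ ℝ^{d₀}, and for ε ≥ 0 define the IBP bounds recursively: ū⁽⁰⁾(ε) = x + ε·𝟙 and u̲⁽⁰⁾(ε) = x − ε·𝟙; for ℓ = 1, …, L set z̄⁽ℓ⁾(ε) = W⁽ℓ⁾·((ū⁽ℓ−1⁾(ε) + u̲⁽ℓ−1⁾(ε))/2) + |W⁽ℓ⁾|·((ū⁽ℓ−1⁾(ε) −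 u̲⁽ℓ−1⁾(ε))/2) + b⁽ℓ⁾ and z̲⁽ℓ⁾(ε) = W⁽ℓ⁾·((ū⁽ℓ−1⁾(ε) + u̲⁽ℓ−1⁾(ε))/2) − |W⁽ℓ⁾|·((ū⁽ℓ−1⁾(ε) − u̲⁽ℓ−1⁾(ε))/2) + b⁽ℓ⁾, and for ℓ ≤ L−1 set ū⁽ℓ⁾(ε) = σ⁽ℓ⁾ applied entrywise to z̄⁽ℓ⁾(ε) and u̲⁽ℓ⁾(ε) = σ⁽ℓ⁾ applied entrywise to z̲⁽ℓ⁾(ε). Then every coordinate of ε ↦ z̄⁽ᴸ⁾(ε) is monotonically non-decreasing and continuous on [0, ∞), and every coordinate of ε ↦ z̲⁽ᴸ⁾(ε) is monotonically non-increasing and continuous on [0, ∞). -/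
/-- IBP upper bound of an affine layer `u ↦ W u + b` on the input interval `[lb, ub]`:
`z̄ = W·(ū+u̲)/2 + |W|·(ū−u̲)/2 + b`. -/
noncomputable def ibpAffineUpper {m n : ℕ} (W : Matrix (Fin m) (Fin n) ℝ)
    (b : Fin m → ℝ) (lb ub : Fin n → ℝ) : Fin m → ℝ :=
  W.mulVec ((ub + lb) / 2) + (W.map fun a => |a|).mulVec ((ub - lb) / 2) + b

/-- IBP lower bound of an affine layer `u ↦ W u + b` on the input interval `[lb, ub]`:
`z̲ = W·(ū+u̲)/2 − |W|·(ū−u̲)/2 + b`. -/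
noncomputable def ibpAffineLower {m n : ℕ} (W : Matrix (Fin m) (Fin n) ℝ)
    (b : Fin m → ℝ) (lb ub : Fin n → ℝ) : Fin m → ℝ :=
  W.mulVec ((ub + lb) / 2) - (W.map fun a => |a|).mulVec ((ub - lb) / 2) + b

/-- Post-activation IBP bounds `(u̲⁽ℓ⁾(ε), ū⁽ℓ⁾(ε))` of a feed-forward network with
layer dimensions `d`, weights `W`, biases `b` and activations `σ` (applied entrywise),
propagating the input interval `[x − ε·𝟙, x + ε·𝟙]`. -/
noncomputable def ibpPostBounds (d : ℕ → ℕ)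
    (W : ∀ ℓ : ℕ, Matrix (Fin (d (ℓ + 1))) (Fin (d ℓ)) ℝ)
    (b : ∀ ℓ : ℕ, Fin (d (ℓ + 1)) → ℝ)
    (σ : ℕ → ℝ → ℝ) (x : Fin (d 0) → ℝ) (ε : ℝ) :
    ∀ ℓ : ℕ, (Fin (d ℓ) → ℝ) × (Fin (d ℓ) → ℝ)
  | 0 => (fun i => x i - ε, fun i => x i + ε)
  | (ℓ + 1) =>
      (fun i => σ ℓ (ibpAffineLower (W ℓ) (b ℓ) (ibpPostBounds d W b σ x ε ℓ).1
          (ibpPostBounds d W b σ x ε ℓ).2 i),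
       fun i => σ ℓ (ibpAffineUpper (W ℓ) (b ℓ) (ibpPostBounds d W b σ x ε ℓ).1
          (ibpPostBounds d W b σ x ε ℓ).2 i))

/-- Final-layer (pre-activation) IBP output lower bound `z̲⁽ᴸ⁾(ε)` of an
`(L'+1)`-layer network: the affine bounds of the last layer `W L', b L'` applied to
the post-activation bounds of layer `L'`. -/
noncomputable def ibpOutLower (d : ℕ → ℕ)
    (W : ∀ ℓ : ℕ, Matrix (Fin (d (ℓ + 1))) (Fin (d ℓ)) ℝ)
    (b : ∀ ℓ : ℕ, Fin (d (ℓ + 1)) → ℝ)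
    (σ : ℕ → ℝ → ℝ) (x : Fin (d 0) → ℝ) (L' : ℕ) (ε : ℝ) : Fin (d (L' + 1)) → ℝ :=
  ibpAffineLower (W L') (b L') (ibpPostBounds d W b σ x ε L').1
    (ibpPostBounds d W b σ x ε L').2

/-- Final-layer (pre-activation) IBP output upper bound `z̄⁽ᴸ⁾(ε)` of an
`(L'+1)`-layer network. -/
noncomputable def ibpOutUpper (d : ℕ → ℕ)
    (W : ∀ ℓ : ℕ, Matrix (Fin (d (ℓ + 1))) (Fin (d ℓ)) ℝ)
    (b : ∀ ℓ : ℕ, Fin (d (ℓ + 1)) → ℝ)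
    (σ : ℕ → ℝ → ℝ) (x : Fin (d 0) → ℝ) (L' : ℕ) (ε : ℝ) : Fin (d (L' + 1)) → ℝ :=
  ibpAffineUpper (W L') (b L') (ibpPostBounds d W b σ x ε L').1
    (ibpPostBounds d W b σ x ε L').2

section Helpers

lemma ibpAffineUpper_eq' {m n : ℕ} (W : Matrix (Fin m) (Fin n) ℝ)
    (b : Fin m → ℝ) (lb ub : Fin n → ℝ) (i : Fin m) :
    ibpAffineUpper W b lb ub i =
      (∑ j, ((W i j + |W i j|) / 2 * ub j + (W i j - |W i j|) / 2 * lb j)) + b i := by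
  simp only [ibpAffineUpper, Pi.add_apply, Matrix.mulVec, dotProduct,
    Matrix.map_apply, Pi.div_apply, Pi.sub_apply, Pi.ofNat_apply,
    ← Finset.sum_add_distrib]
  congr 1
  refine Finset.sum_congr rfl fun j _ => by ring

lemma ibpAffineLower_eq' {m n : ℕ} (W : Matrix (Fin m) (Fin n) ℝ)
    (b : Fin m → ℝ) (lb ub : Fin n → ℝ) (i : Fin m) :
    ibpAffineLower W b lb ub i =
      (∑ j, ((W i j - |W i j|) / 2 * ub j + (W i j + |W i j|) / 2 * lb j)) + b i := by
  simp only [ibpAffineLower, Pi.add_apply, Matrix.mulVec, dotProduct,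
    Matrix.map_apply, Pi.div_apply, Pi.sub_apply, Pi.ofNat_apply, ← Finset.sum_sub_distrib]
  congr 1
  refine Finset.sum_congr rfl fun j _ => by ring

lemma coef_nonneg (w : ℝ) : 0 ≤ (w + |w|) / 2 := by
  have := neg_abs_le w; linarith

lemma coef_nonpos (w : ℝ) : (w - |w|) / 2 ≤ 0 := by
  have := le_abs_self w; linarith

lemma affineUpper_mono {m n : ℕ} (W : Matrix (Fin m) (Fin n) ℝ) (b : Fin m → ℝ)
    (lb ub : ℝ → Fin n → ℝ)
    (hub : ∀ j, MonotoneOn (fun ε => ub ε j) (Set.Ici (0:ℝ)))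
    (hlb : ∀ j, AntitoneOn (fun ε => lb ε j) (Set.Ici (0:ℝ))) (i : Fin m) :
    MonotoneOn (fun ε => ibpAffineUpper W b (lb ε) (ub ε) i) (Set.Ici 0) := by
  intro a ha c hc hac
  simp only [ibpAffineUpper_eq']
  refine add_le_add (Finset.sum_le_sum fun j _ => add_le_add ?_ ?_) le_rfl
  · exact mul_le_mul_of_nonneg_left (hub j ha hc hac) (coef_nonneg _)
  · exact mul_le_mul_of_nonpos_left (hlb j ha hc hac) (coef_nonpos _)

lemma affineLower_anti {m n : ℕ} (W : Matrix (Fin m) (Fin n) ℝ) (b : Fin m → ℝ)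
    (lb ub : ℝ → Fin n → ℝ)
    (hub : ∀ j, MonotoneOn (fun ε => ub ε j) (Set.Ici (0:ℝ)))
    (hlb : ∀ j, AntitoneOn (fun ε => lb ε j) (Set.Ici (0:ℝ))) (i : Fin m) :
    AntitoneOn (fun ε => ibpAffineLower W b (lb ε) (ub ε) i) (Set.Ici 0) := by
  intro a ha c hc hac
  simp only [ibpAffineLower_eq']
  refine add_le_add (Finset.sum_le_sum fun j _ => add_le_add ?_ ?_) le_rfl
  · exact mul_le_mul_of_nonpos_left (hub j ha hc hac) (coef_nonpos _)
  · exact mul_le_mul_of_nonneg_left (hlb j ha hc hac) (coef_nonneg _)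

lemma affineUpper_cont {m n : ℕ} (W : Matrix (Fin m) (Fin n) ℝ) (b : Fin m → ℝ)
    (lb ub : ℝ → Fin n → ℝ)
    (hub : ∀ j, ContinuousOn (fun ε => ub ε j) (Set.Ici (0:ℝ)))
    (hlb : ∀ j, ContinuousOn (fun ε => lb ε j) (Set.Ici (0:ℝ))) (i : Fin m) :
    ContinuousOn (fun ε => ibpAffineUpper W b (lb ε) (ub ε) i) (Set.Ici 0) := by
  simp only [ibpAffineUpper_eq']
  refine ContinuousOn.add (continuousOn_finset_sum _ fun j _ => ?_) continuousOn_const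
  exact (continuousOn_const.mul (hub j)).add (continuousOn_const.mul (hlb j))

lemma affineLower_cont {m n : ℕ} (W : Matrix (Fin m) (Fin n) ℝ) (b : Fin m → ℝ)
    (lb ub : ℝ → Fin n → ℝ)
    (hub : ∀ j, ContinuousOn (fun ε => ub ε j) (Set.Ici (0:ℝ)))
    (hlb : ∀ j, ContinuousOn (fun ε => lb ε j) (Set.Ici (0:ℝ))) (i : Fin m) :
    ContinuousOn (fun ε => ibpAffineLower W b (lb ε) (ub ε) i) (Set.Ici 0) := by
  simp only [ibpAffineLower_eq']
  refine ContinuousOn.add (continuousOn_finset_sum _ fun j _ => ?_) continuousOn_const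
  exact (continuousOn_const.mul (hub j)).add (continuousOn_const.mul (hlb j))

lemma ibpPost_props (L' : ℕ) (d : ℕ → ℕ)
    (W : ∀ ℓ : ℕ, Matrix (Fin (d (ℓ + 1))) (Fin (d ℓ)) ℝ)
    (b : ∀ ℓ : ℕ, Fin (d (ℓ + 1)) → ℝ)
    (σ : ℕ → ℝ → ℝ)
    (hσ : ∀ ℓ < L', Monotone (σ ℓ) ∧ Continuous (σ ℓ))
    (x : Fin (d 0) → ℝ) :
    ∀ ℓ ≤ L', ∀ j : Fin (d ℓ),
      MonotoneOn (fun ε => (ibpPostBounds d W b σ x ε ℓ).2 j) (Set.Ici 0) ∧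
      ContinuousOn (fun ε => (ibpPostBounds d W b σ x ε ℓ).2 j) (Set.Ici 0) ∧
      AntitoneOn (fun ε => (ibpPostBounds d W b σ x ε ℓ).1 j) (Set.Ici 0) ∧
      ContinuousOn (fun ε => (ibpPostBounds d W b σ x ε ℓ).1 j) (Set.Ici 0) := by
  intro ℓ
  induction ℓ with
  | zero =>
    intro _ j
    simp only [ibpPostBounds]
    exact ⟨fun a _ c _ hac => by dsimp; linarith,
      (continuous_const.add continuous_id).continuousOn,
      fun a _ c _ hac => by dsimp; linarith,
      (continuous_const.sub continuous_id).continuousOn⟩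
  | succ ℓ ih =>
    intro hle j
    have hℓ : ℓ < L' := Nat.lt_of_succ_le hle
    have ihh := ih (le_of_lt hℓ)
    obtain ⟨hmono, hcont⟩ := hσ ℓ hℓ
    have hub := fun j => (ihh j).1
    have hubc := fun j => (ihh j).2.1
    have hlb := fun j => (ihh j).2.2.1
    have hlbc := fun j => (ihh j).2.2.2
    simp only [ibpPostBounds]
    refine ⟨hmono.comp_monotoneOn (affineUpper_mono (W ℓ) (b ℓ) _ _ hub hlb j),
      hcont.comp_continuousOn (affineUpper_cont (W ℓ) (b ℓ) _ _ hubc hlbc j),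
      hmono.comp_antitoneOn (affineLower_anti (W ℓ) (b ℓ) _ _ hub hlb j),
      hcont.comp_continuousOn (affineLower_cont (W ℓ) (b ℓ) _ _ hubc hlbc j)⟩

end Helpers

/-- For an `L`-layer feed-forward network (here `L = L' + 1 ≥ 1`) with
monotonically non-decreasing continuous activations `σ⁽ℓ⁾` for the hidden layers
`ℓ = 1, …, L − 1`, each coordinate of the final-layer IBP upper bound
`ε ↦ z̄⁽ᴸ⁾(ε)` is monotonically non-decreasing and continuous on `[0, ∞)`, and each
coordinate of the final-layer IBP lower bound `ε ↦ z̲⁽ᴸ⁾(ε)` is monotonically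
non-increasing and continuous on `[0, ∞)`. -/
theorem ibp_output_bounds_monotone_continuous
    (L' : ℕ) (d : ℕ → ℕ)
    (W : ∀ ℓ : ℕ, Matrix (Fin (d (ℓ + 1))) (Fin (d ℓ)) ℝ)
    (b : ∀ ℓ : ℕ, Fin (d (ℓ + 1)) → ℝ)
    (σ : ℕ → ℝ → ℝ)
    (hσ : ∀ ℓ < L', Monotone (σ ℓ) ∧ Continuous (σ ℓ))
    (x : Fin (d 0) → ℝ) :
    ∀ i : Fin (d (L' + 1)),
      MonotoneOn (fun ε => ibpOutUpper d W b σ x L' ε i) (Set.Ici 0) ∧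
      ContinuousOn (fun ε => ibpOutUpper d W b σ x L' ε i) (Set.Ici 0) ∧
      AntitoneOn (fun ε => ibpOutLower d W b σ x L' ε i) (Set.Ici 0) ∧
      ContinuousOn (fun ε => ibpOutLower d W b σ x L' ε i) (Set.Ici 0) := by
  intro i
  have H := ibpPost_props L' d W b σ hσ x L' le_rfl
  have hub := fun j => (H j).1
  have hubc := fun j => (H j).2.1
  have hlb := fun j => (H j).2.2.1
  have hlbc := fun j => (H j).2.2.2
  exact ⟨affineUpper_mono (W L') (b L') _ _ hub hlb i,
    affineUpper_cont (W L') (b L') _ _ hubc hlbc i,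
    affineLower_anti (W L') (b L') _ _ hub hlb i,
    affineLower_cont (W L') (b L') _ _ hubc hlbc i⟩
end

section
/- Let c ≥ 2 and M > 0. Consider an L-layer feed-forward network with output dimension d_L = c, monotonically non-decreasing continuous activations, an input x, a label y, and let R_cert(x, ε) = max_{i ≠ y}( z̄⁽ᴸ⁾(ε)_i − z̲⁽ᴸ⁾(ε)_y ) be the IBP-certified margin obtained by propagating the input interval [x − ε·𝟙, x + ε·𝟙] through the network. If R_cert(x, 0) < 0 and R_cert(x, M) ≥ 0, then the set Z = {ε ∈ [0, M] : R_cert(x, ε) = 0} is nonempty, the certified robust radius ε* := sInf Z satisfies R_cert(x, ε*) = 0, and ε* = sSup {ε ∈ [0, M] : R_cert(x, ε) < 0}. -/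
/-- The IBP-certified margin function
`R_cert(x, ε) = max_{i ≠ y} ( z̄⁽ᴸ⁾(ε)_i − z̲⁽ᴸ⁾(ε)_y )`. -/
noncomputable def ibpCertMargin (d : ℕ → ℕ)
    (W : ∀ ℓ : ℕ, Matrix (Fin (d (ℓ + 1))) (Fin (d ℓ)) ℝ)
    (b : ∀ ℓ : ℕ, Fin (d (ℓ + 1)) → ℝ)
    (σ : ℕ → ℝ → ℝ) (x : Fin (d 0) → ℝ) (L' : ℕ) (y : Fin (d (L' + 1)))
    (ε : ℝ) : ℝ :=
  ⨆ i : {i : Fin (d (L' + 1)) // i ≠ y},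
    (ibpOutUpper d W b σ x L' ε i.1 - ibpOutLower d W b σ x L' ε y)


lemma ibpAffineUpper_apply {m n : ℕ} (W : Matrix (Fin m) (Fin n) ℝ)
    (b : Fin m → ℝ) (lb ub : Fin n → ℝ) (i : Fin m) :
    ibpAffineUpper W b lb ub i =
      (∑ j, (W i j * ((ub j + lb j) / 2) + |W i j| * ((ub j - lb j) / 2))) + b i := by
  simp [ibpAffineUpper, Matrix.mulVec, dotProduct, Finset.sum_add_distrib]

lemma ibpAffineLower_apply {m n : ℕ} (W : Matrix (Fin m) (Fin n) ℝ)
    (b : Fin m → ℝ) (lb ub : Fin n → ℝ) (i : Fin m) :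
    ibpAffineLower W b lb ub i =
      (∑ j, (W i j * ((ub j + lb j) / 2) - |W i j| * ((ub j - lb j) / 2))) + b i := by
  simp [ibpAffineLower, Matrix.mulVec, dotProduct, Finset.sum_sub_distrib, sub_add_eq_add_sub]

lemma ibpAffineUpper_mono {m n : ℕ} (W : Matrix (Fin m) (Fin n) ℝ)
    (b : Fin m → ℝ) {L U : ℝ → Fin n → ℝ}
    (hL : ∀ j, Antitone (fun ε => L ε j)) (hU : ∀ j, Monotone (fun ε => U ε j)) (i : Fin m) :
    Monotone (fun ε => ibpAffineUpper W b (L ε) (U ε) i) := by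
  intro ε₁ ε₂ h
  simp only [ibpAffineUpper_apply]
  refine add_le_add_left (Finset.sum_le_sum fun j _ => ?_) _
  have h1 := hL j h
  have h2 := hU j h
  rcases abs_cases (W i j) with ⟨e, he⟩ | ⟨e, he⟩ <;> rw [e] <;> nlinarith

lemma ibpAffineLower_anti {m n : ℕ} (W : Matrix (Fin m) (Fin n) ℝ)
    (b : Fin m → ℝ) {L U : ℝ → Fin n → ℝ}
    (hL : ∀ j, Antitone (fun ε => L ε j)) (hU : ∀ j, Monotone (fun ε => U ε j)) (i : Fin m) :
    Antitone (fun ε => ibpAffineLower W b (L ε) (U ε) i) := by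
  intro ε₁ ε₂ h
  simp only [ibpAffineLower_apply]
  refine add_le_add_left (Finset.sum_le_sum fun j _ => ?_) _
  have h1 := hL j h
  have h2 := hU j h
  rcases abs_cases (W i j) with ⟨e, he⟩ | ⟨e, he⟩ <;> rw [e] <;> nlinarith

lemma ibpAffineUpper_cont {m n : ℕ} (W : Matrix (Fin m) (Fin n) ℝ)
    (b : Fin m → ℝ) {L U : ℝ → Fin n → ℝ}
    (hL : ∀ j, Continuous (fun ε => L ε j)) (hU : ∀ j, Continuous (fun ε => U ε j)) (i : Fin m) :
    Continuous (fun ε => ibpAffineUpper W b (L ε) (U ε) i) := by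
  simp only [ibpAffineUpper_apply]
  refine Continuous.add (continuous_finset_sum _ fun j _ => ?_) continuous_const
  exact (continuous_const.mul (((hU j).add (hL j)).div_const 2)).add
    (continuous_const.mul (((hU j).sub (hL j)).div_const 2))

lemma ibpAffineLower_cont {m n : ℕ} (W : Matrix (Fin m) (Fin n) ℝ)
    (b : Fin m → ℝ) {L U : ℝ → Fin n → ℝ}
    (hL : ∀ j, Continuous (fun ε => L ε j)) (hU : ∀ j, Continuous (fun ε => U ε j)) (i : Fin m) :
    Continuous (fun ε => ibpAffineLower W b (L ε) (U ε) i) := by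
  simp only [ibpAffineLower_apply]
  refine Continuous.add (continuous_finset_sum _ fun j _ => ?_) continuous_const
  exact (continuous_const.mul (((hU j).add (hL j)).div_const 2)).sub
    (continuous_const.mul (((hU j).sub (hL j)).div_const 2))

lemma ibpPostBounds_mono_cont (d : ℕ → ℕ)
    (W : ∀ ℓ : ℕ, Matrix (Fin (d (ℓ + 1))) (Fin (d ℓ)) ℝ)
    (b : ∀ ℓ : ℕ, Fin (d (ℓ + 1)) → ℝ)
    (σ : ℕ → ℝ → ℝ) (x : Fin (d 0) → ℝ) (L' : ℕ)
    (hσ : ∀ ℓ < L', Monotone (σ ℓ) ∧ Continuous (σ ℓ)) :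
    ∀ ℓ ≤ L',
      (∀ i, Antitone (fun ε => (ibpPostBounds d W b σ x ε ℓ).1 i) ∧
        Continuous (fun ε => (ibpPostBounds d W b σ x ε ℓ).1 i)) ∧
      (∀ i, Monotone (fun ε => (ibpPostBounds d W b σ x ε ℓ).2 i) ∧
        Continuous (fun ε => (ibpPostBounds d W b σ x ε ℓ).2 i)) := by
  intro ℓ
  induction ℓ with
  | zero =>
    intro _
    constructor
    · intro i
      simp only [ibpPostBounds]
      exact ⟨fun a c h => sub_le_sub_left h _, continuous_const.sub continuous_id⟩
    · intro i
      simp only [ibpPostBounds]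
      exact ⟨fun a c h => add_le_add_right h _, continuous_const.add continuous_id⟩
  | succ ℓ ih =>
    intro hℓ
    obtain ⟨ihL, ihU⟩ := ih (le_of_lt hℓ)
    obtain ⟨hmono, hcont⟩ := hσ ℓ hℓ
    constructor
    · intro i
      simp only [ibpPostBounds]
      exact ⟨hmono.comp_antitone (ibpAffineLower_anti (W ℓ) (b ℓ)
          (fun j => (ihL j).1) (fun j => (ihU j).1) i),
        hcont.comp (ibpAffineLower_cont (W ℓ) (b ℓ)
          (fun j => (ihL j).2) (fun j => (ihU j).2) i)⟩
    · intro i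
      simp only [ibpPostBounds]
      exact ⟨hmono.comp (ibpAffineUpper_mono (W ℓ) (b ℓ)
          (fun j => (ihL j).1) (fun j => (ihU j).1) i),
        hcont.comp (ibpAffineUpper_cont (W ℓ) (b ℓ)
          (fun j => (ihL j).2) (fun j => (ihU j).2) i)⟩

/-- Existence of the certified robust radius for IBP-certified
feed-forward networks. For an `L`-layer network (here `L = L' + 1 ≥ 1`) with
output dimension `c = d_L ≥ 2`, monotonically non-decreasing continuous hidden
activations, input `x`, label `y` and `M > 0`, if the IBP-certified margin
satisfies `R_cert(x, 0) < 0` and `R_cert(x, M) ≥ 0`, then the zero set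
`Z = {ε ∈ [0, M] | R_cert(x, ε) = 0}` is nonempty, the certified robust radius
`ε* = sInf Z` satisfies `R_cert(x, ε*) = 0`, and
`ε* = sSup {ε ∈ [0, M] | R_cert(x, ε) < 0}`. -/
theorem certified_robust_radius_exists
    (L' : ℕ) (d : ℕ → ℕ) (hd : 2 ≤ d (L' + 1))
    (W : ∀ ℓ : ℕ, Matrix (Fin (d (ℓ + 1))) (Fin (d ℓ)) ℝ)
    (b : ∀ ℓ : ℕ, Fin (d (ℓ + 1)) → ℝ)
    (σ : ℕ → ℝ → ℝ)
    (hσ : ∀ ℓ < L', Monotone (σ ℓ) ∧ Continuous (σ ℓ))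
    (x : Fin (d 0) → ℝ) (y : Fin (d (L' + 1)))
    (M : ℝ) (hM : 0 < M)
    (h0 : ibpCertMargin d W b σ x L' y 0 < 0)
    (hMv : 0 ≤ ibpCertMargin d W b σ x L' y M) :
    {ε | ε ∈ Set.Icc (0 : ℝ) M ∧ ibpCertMargin d W b σ x L' y ε = 0}.Nonempty ∧
    ibpCertMargin d W b σ x L' y
      (sInf {ε | ε ∈ Set.Icc (0 : ℝ) M ∧ ibpCertMargin d W b σ x L' y ε = 0}) = 0 ∧
    sInf {ε | ε ∈ Set.Icc (0 : ℝ) M ∧ ibpCertMargin d W b σ x L' y ε = 0}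
      = sSup {ε | ε ∈ Set.Icc (0 : ℝ) M ∧ ibpCertMargin d W b σ x L' y ε < 0} := by

  obtain ⟨hbL, hbU⟩ := ibpPostBounds_mono_cont d W b σ x L' hσ L' le_rfl
  have hUp : ∀ i, Monotone (fun ε => ibpOutUpper d W b σ x L' ε i) ∧
      Continuous (fun ε => ibpOutUpper d W b σ x L' ε i) := fun i =>
    ⟨ibpAffineUpper_mono (W L') (b L') (fun j => (hbL j).1) (fun j => (hbU j).1) i,
     ibpAffineUpper_cont (W L') (b L') (fun j => (hbL j).2) (fun j => (hbU j).2) i⟩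
  have hLo : Antitone (fun ε => ibpOutLower d W b σ x L' ε y) ∧
      Continuous (fun ε => ibpOutLower d W b σ x L' ε y) :=
    ⟨ibpAffineLower_anti (W L') (b L') (fun j => (hbL j).1) (fun j => (hbU j).1) y,
     ibpAffineLower_cont (W L') (b L') (fun j => (hbL j).2) (fun j => (hbU j).2) y⟩
  set R : ℝ → ℝ := ibpCertMargin d W b σ x L' y with hRdef
  set g : {i : Fin (d (L' + 1)) // i ≠ y} → ℝ → ℝ :=
    fun i ε => ibpOutUpper d W b σ x L' ε i.1 - ibpOutLower d W b σ x L' ε y with hgdef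
  have hgm : ∀ i, Monotone (g i) := fun i a c h => sub_le_sub ((hUp i.1).1 h) (hLo.1 h)
  have hgc : ∀ i, Continuous (g i) := fun i => ((hUp i.1).2).sub hLo.2
  haveI : Nonempty {i : Fin (d (L' + 1)) // i ≠ y} := by
    obtain ⟨i, hi⟩ := Fintype.exists_ne_of_one_lt_card (by simp only [Fintype.card_fin]; omega) y
    exact ⟨⟨i, hi⟩⟩
  have hR : ∀ ε, R ε = Finset.univ.sup' Finset.univ_nonempty (fun i => g i ε) := by
    intro ε
    rw [Finset.sup'_univ_eq_ciSup]
    rfl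
  have hRmono : Monotone R := by
    intro a c h
    rw [hR, hR]
    exact Finset.sup'_le _ _ fun i _ =>
      le_trans (hgm i h) (Finset.le_sup' (fun i => g i c) (Finset.mem_univ i))
  have hRcont : Continuous R := by
    have : Continuous (fun ε => Finset.univ.sup' Finset.univ_nonempty (fun i => g i ε)) :=
      Continuous.finset_sup'_apply Finset.univ_nonempty fun i _ => hgc i
    exact this.congr fun ε => (hR ε).symm
  set Z := {ε | ε ∈ Set.Icc (0 : ℝ) M ∧ R ε = 0} with hZdef
  have hZeq : Z = Set.Icc (0 : ℝ) M ∩ R ⁻¹' {0} := by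
    ext ε
    simp only [hZdef, Set.mem_setOf_eq, Set.mem_inter_iff, Set.mem_preimage,
      Set.mem_singleton_iff]
  obtain ⟨t, htIcc, ht0⟩ := intermediate_value_Icc hM.le hRcont.continuousOn ⟨h0.le, hMv⟩
  have hZne : Z.Nonempty := ⟨t, htIcc, ht0⟩
  have hZclosed : IsClosed Z := by
    rw [hZeq]
    exact isClosed_Icc.inter (isClosed_singleton.preimage hRcont)
  have hZbdd : BddBelow Z := ⟨0, fun z hz => hz.1.1⟩
  have hmem : sInf Z ∈ Z := hZclosed.csInf_mem hZne hZbdd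
  refine ⟨hZne, hmem.2, ?_⟩
  set N := {ε | ε ∈ Set.Icc (0 : ℝ) M ∧ R ε < 0} with hNdef
  have hNne : N.Nonempty := ⟨0, ⟨le_refl 0, hM.le⟩, h0⟩
  have hNbdd : BddAbove N := ⟨M, fun z hz => hz.1.2⟩
  have hle : sSup N ≤ sInf Z := by
    refine csSup_le hNne fun ε hε => ?_
    by_contra hlt
    push_neg at hlt
    have : R (sInf Z) ≤ R ε := hRmono hlt.le
    rw [hmem.2] at this
    exact absurd hε.2 (not_lt.2 this)
  refine le_antisymm ?_ hle
  by_contra hlt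
  push_neg at hlt
  have hN0 : (0 : ℝ) ≤ sSup N := le_csSup hNbdd ⟨⟨le_refl 0, hM.le⟩, h0⟩
  set m := (sSup N + sInf Z) / 2 with hmdef
  have hm1 : sSup N < m := by rw [hmdef]; linarith
  have hm2 : m < sInf Z := by rw [hmdef]; linarith
  have hm0 : (0 : ℝ) ≤ m := by linarith
  have hmM : m ≤ M := le_trans hm2.le hmem.1.2
  have hRm : R m ≤ 0 := by
    have := hRmono hm2.le
    rwa [hmem.2] at this
  rcases lt_or_eq_of_le hRm with h | h
  · have : m ∈ N := ⟨⟨hm0, hmM⟩, h⟩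
    exact absurd (le_csSup hNbdd this) (not_le.2 hm1)
  · have : m ∈ Z := ⟨⟨hm0, hmM⟩, h⟩
    exact absurd (csInf_le hZbdd this) (not_le.2 hm2)
end
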